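/- For the Case 2 chain (i₁ = i₂ = i, l₁ ≢ l₂ mod n), with ε as given by the two-row formula, consecutive elements of the chain [i;l₁)⊕[i;l₂) → [i;l₁-{l₁-l₂})⊕[i;l₂+{l₁-l₂}) satisfy ε(successor) = ε(predecessor) + 1 (codimension 1 at each link). -/
import Mathlib

lemma ceil_div_eq' (n : ℕ) (a : ℚ) (k : ℤ)
    (h1 : (k : ℚ) * n - n < a) (h2 : a ≤ (k : ℚ) * n) :
    ⌈a / (n : ℚ)⌉ = k := by
  have hn : (0 : ℚ) < n := by
    rcases Nat.eq_zero_or_pos n with h | h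
    · subst h; simp at h1 h2; linarith
    · exact_mod_cast h
  rw [Int.ceil_eq_iff]
  constructor
  · rw [lt_div_iff₀ hn]; linarith
  · rw [div_le_iff₀ hn]; linarith

lemma mod_helper' (n x y c : ℕ) (h : x = c * n + y) (hy : y < n) : x % n = y := by
  subst h
  rw [Nat.mul_comm, Nat.mul_add_mod, Nat.mod_eq_of_lt hy]

lemma val_sub_one' (n : ℕ) [NeZero n] (l : ℕ) :
    ((l : ZMod n) - 1).val = (l + (n - 1)) % n := by
  have h1 : 1 ≤ n := Nat.one_le_iff_ne_zero.2 (NeZero.ne n)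
  have e : ((l + (n - 1) : ℕ) : ZMod n) = (l : ZMod n) - 1 := by
    rw [Nat.cast_add, Nat.cast_sub h1, ZMod.natCast_self, Nat.cast_one]
    ring
  rw [← e, ZMod.val_natCast]

/-- `ε` of the two-row multisegment `[i₁;l₁) ⊕ [i₂;l₂)` (with `l₁ ≥ l₂`). -/
def epsTwo (n : ℕ) [NeZero n] (i₁ i₂ : ZMod n) (l₁ l₂ : ℕ) : ℤ :=
  ⌈(l₁ : ℚ) / n⌉ + ⌈(l₂ : ℚ) / n⌉
    + ⌈((l₂ : ℚ) - ((i₁ - i₂ + (l₁ : ZMod n) - 1).val : ℚ)) / n⌉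
    + ⌈((l₂ : ℚ) - ((i₁ - i₂).val : ℚ)) / n⌉

set_option maxHeartbeats 1000000 in
/-- Case 2 chain, codimension 1: for `i₁ = i₂ = i` and
`l₁ ≢ l₂ (mod n)`, with `l₁ - l₂ ≥ n` (so that the successor is distinct and
has its rows in order), the step
`[i;l₁)⊕[i;l₂) → [i;l₁-{l₁-l₂})⊕[i;l₂+{l₁-l₂})` in the chain satisfies
`ε(successor) = ε(predecessor) + 1`. -/
theorem stmt_13 (n : ℕ) [NeZero n] (hn : 2 ≤ n) (i : ZMod n) (l₁ l₂ : ℕ)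
    (hl : l₂ ≤ l₁) (hmod : l₁ % n ≠ l₂ % n) (hbig : n ≤ l₁ - l₂)
    (B : ℕ) (hB : B = (l₁ - l₂) % n) :
    epsTwo n i i (l₁ - B) (l₂ + B) = epsTwo n i i l₁ l₂ + 1 := by
  have hn1 : 1 ≤ n := by omega
  have hn0 : 0 < n := by omega
  have hBlt : B < n := by rw [hB]; exact Nat.mod_lt _ hn0
  set q := (l₁ - l₂) / n with hqdef
  have hd : l₁ - l₂ = n * q + B := by
    rw [hB, hqdef]; exact (Nat.div_add_mod _ n).symm
  have hBpos : 0 < B := by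
    rcases Nat.eq_zero_or_pos B with h | h
    · exfalso
      apply hmod
      have hdvd : n ∣ l₁ - l₂ := ⟨q, by simp [hd, h]⟩
      exact ((Nat.modEq_iff_dvd' hl).2 hdvd).symm
    · exact h
  have hq1 : 1 ≤ q := by
    rcases Nat.eq_zero_or_pos q with h | h
    · rw [h, Nat.mul_zero, Nat.zero_add] at hd; omega
    · exact h
  set m := l₂ / n with hmdef
  set r := l₂ % n with hrdef
  have hr : r < n := Nat.mod_lt _ hn0
  have hl2 : l₂ = n * m + r := (Nat.div_add_mod l₂ n).symm
  have hBle : B ≤ l₁ := by omega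
  have hl1 : l₁ = n * m + r + (n * q + B) := by
    rw [← hl2, ← hd]; omega
  -- integer and rational versions
  have hl1z : (l₁ : ℤ) = n * m + r + (n * q + B) := by exact_mod_cast hl1
  have hl2z : (l₂ : ℤ) = n * m + r := by exact_mod_cast hl2
  have hl1q : (l₁ : ℚ) = n * m + r + (n * q + B) := by exact_mod_cast hl1
  have hl2q : (l₂ : ℚ) = n * m + r := by exact_mod_cast hl2
  have hrq : (r : ℚ) < n := by exact_mod_cast hr
  have hBq : (B : ℚ) < n := by exact_mod_cast hBlt
  have hB1q : (1 : ℚ) ≤ B := by exact_mod_cast hBpos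
  have hq1q : (1 : ℚ) ≤ q := by exact_mod_cast hq1
  have hnq : (1 : ℚ) ≤ n := by exact_mod_cast hn1
  have hrq' : (r : ℚ) + 1 ≤ n := by exact_mod_cast hr
  have hBq' : (B : ℚ) + 1 ≤ n := by exact_mod_cast hBlt
  simp only [epsTwo, sub_self, zero_add, ZMod.val_zero, Nat.cast_zero, sub_zero]
  rw [val_sub_one', val_sub_one']
  rcases Nat.eq_zero_or_pos r with hr0 | hr1
  · -- case r = 0 (then r + B ≤ n automatically)
    have hr0z : (r : ℤ) = 0 := by exact_mod_cast hr0
    have hr0q : (r : ℚ) = 0 := by exact_mod_cast hr0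
    have hw₁ : (l₁ - B + (n - 1)) % n = n - 1 :=
      mod_helper' n _ _ (m + q) (by zify [hBle, hn1]; linarith) (by omega)
    have hB1 : 1 ≤ B := hBpos
    have hw₂ : (l₁ + (n - 1)) % n = B - 1 :=
      mod_helper' n _ _ (m + q + 1) (by zify [hn1, hB1]; linarith) (by omega)
    have hw₁q : (((l₁ - B + (n - 1)) % n : ℕ) : ℚ) = (n : ℚ) - 1 := by
      rw [hw₁, Nat.cast_sub hn1, Nat.cast_one]
    have hw₂q : (((l₁ + (n - 1)) % n : ℕ) : ℚ) = (B : ℚ) - 1 := by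
      rw [hw₂, Nat.cast_sub hB1, Nat.cast_one]
    rw [hw₁q, hw₂q]
    rw [ceil_div_eq' n ((l₁ - B : ℕ) : ℚ) ((m : ℤ) + q)
      (by push_cast [Nat.cast_sub hBle]; linarith) (by push_cast [Nat.cast_sub hBle]; linarith)]
    rw [ceil_div_eq' n ((l₂ + B : ℕ) : ℚ) ((m : ℤ) + 1)
      (by push_cast; linarith) (by push_cast; linarith)]
    rw [ceil_div_eq' n (((l₂ + B : ℕ) : ℚ) - ((n : ℚ) - 1)) ((m : ℤ))
      (by push_cast; linarith) (by push_cast; linarith)]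
    rw [ceil_div_eq' n ((l₁ : ℕ) : ℚ) ((m : ℤ) + q + 1)
      (by push_cast; linarith) (by push_cast; linarith)]
    rw [ceil_div_eq' n ((l₂ : ℕ) : ℚ) ((m : ℤ))
      (by push_cast; linarith) (by push_cast; linarith)]
    rw [ceil_div_eq' n (((l₂ : ℕ) : ℚ) - ((B : ℚ) - 1)) ((m : ℤ))
      (by push_cast; linarith) (by push_cast; linarith)]
    ring
  · -- case r ≥ 1
    have hr1q : (1 : ℚ) ≤ r := by exact_mod_cast hr1
    have hw₁ : (l₁ - B + (n - 1)) % n = r - 1 :=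
      mod_helper' n _ _ (m + q + 1) (by zify [hBle, hn1, hr1]; linarith) (by omega)
    have hw₁q : (((l₁ - B + (n - 1)) % n : ℕ) : ℚ) = (r : ℚ) - 1 := by
      rw [hw₁, Nat.cast_sub hr1, Nat.cast_one]
    rw [hw₁q]
    have h1rB : 1 ≤ r + B := by omega
    by_cases hc : r + B ≤ n
    · -- case r + B ≤ n
      have hcq : (r : ℚ) + B ≤ n := by exact_mod_cast hc
      have hw₂ : (l₁ + (n - 1)) % n = r + B - 1 :=
        mod_helper' n _ _ (m + q + 1) (by zify [hn1, h1rB]; linarith) (by omega)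
      have hw₂q : (((l₁ + (n - 1)) % n : ℕ) : ℚ) = (r : ℚ) + B - 1 := by
        rw [hw₂, Nat.cast_sub h1rB]; push_cast; ring
      rw [hw₂q]
      rw [ceil_div_eq' n ((l₁ - B : ℕ) : ℚ) ((m : ℤ) + q + 1)
        (by push_cast [Nat.cast_sub hBle]; linarith) (by push_cast [Nat.cast_sub hBle]; linarith)]
      rw [ceil_div_eq' n ((l₂ + B : ℕ) : ℚ) ((m : ℤ) + 1)
        (by push_cast; linarith) (by push_cast; linarith)]
      rw [ceil_div_eq' n (((l₂ + B : ℕ) : ℚ) - ((r : ℚ) - 1)) ((m : ℤ) + 1)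
        (by push_cast; linarith) (by push_cast; linarith)]
      rw [ceil_div_eq' n ((l₁ : ℕ) : ℚ) ((m : ℤ) + q + 1)
        (by push_cast; linarith) (by push_cast; linarith)]
      rw [ceil_div_eq' n ((l₂ : ℕ) : ℚ) ((m : ℤ) + 1)
        (by push_cast; linarith) (by push_cast; linarith)]
      rw [ceil_div_eq' n (((l₂ : ℕ) : ℚ) - ((r : ℚ) + B - 1)) ((m : ℤ))
        (by push_cast; linarith) (by push_cast; linarith)]
      ring
    · -- case r + B > n
      push_neg at hc
      have hcq : (n : ℚ) + 1 ≤ (r : ℚ) + B := by exact_mod_cast hc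
      have h2 : n ≤ r + B - 1 := by omega
      have hw₂ : (l₁ + (n - 1)) % n = r + B - 1 - n :=
        mod_helper' n _ _ (m + q + 2) (by zify [hn1, h1rB, h2]; linarith) (by omega)
      have hw₂q : (((l₁ + (n - 1)) % n : ℕ) : ℚ) = (r : ℚ) + B - 1 - n := by
        rw [hw₂, Nat.cast_sub h2, Nat.cast_sub h1rB]; push_cast; ring
      rw [hw₂q]
      rw [ceil_div_eq' n ((l₁ - B : ℕ) : ℚ) ((m : ℤ) + q + 1)
        (by push_cast [Nat.cast_sub hBle]; linarith) (by push_cast [Nat.cast_sub hBle]; linarith)]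
      rw [ceil_div_eq' n ((l₂ + B : ℕ) : ℚ) ((m : ℤ) + 2)
        (by push_cast; linarith) (by push_cast; linarith)]
      rw [ceil_div_eq' n (((l₂ + B : ℕ) : ℚ) - ((r : ℚ) - 1)) ((m : ℤ) + 1)
        (by push_cast; linarith) (by push_cast; linarith)]
      rw [ceil_div_eq' n ((l₁ : ℕ) : ℚ) ((m : ℤ) + q + 2)
        (by push_cast; linarith) (by push_cast; linarith)]
      rw [ceil_div_eq' n ((l₂ : ℕ) : ℚ) ((m : ℤ) + 1)
        (by push_cast; linarith) (by push_cast; linarith)]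
      rw [ceil_div_eq' n (((l₂ : ℕ) : ℚ) - ((r : ℚ) + B - 1 - n)) ((m : ℤ) + 1)
        (by push_cast; linarith) (by push_cast; linarith)]
      ring
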